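/- If F is a generalized fighting fish and 0 ≤ i ≤ ℓ(F), then the i-augmentation ✠_i(F) is a generalized fighting fish. -/
import Mathlib


/-- The four-letter alphabet of steps. -/
inductive Letter : Type
  | E | N | W | S
deriving DecidableEq, Repr

open Letter

/-- Fighting fish: words obtainable from `ENWS` by upper, lower and double gluings. -/
inductive IsFF : List Letter → Prop
  | base : IsFF [E, N, W, S]
  | upper (u v : List Letter) :
      IsFF (u ++ [W] ++ v) → IsFF (u ++ [N, W, S] ++ v)
  | lower (u v : List Letter) :
      IsFF (u ++ [N] ++ v) → IsFF (u ++ [E, N, W] ++ v)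
  | double (u v : List Letter) :
      IsFF (u ++ [W, N] ++ v) → IsFF (u ++ [N, W] ++ v)

/-- Generalized fighting fish: words obtainable from the empty word by the
operations `∇_k` (replace `N^k` by `E N^k W`) and `△_k` (replace `W^k` by `N W^k S`),
for `k ≥ 0`. -/
inductive IsGFF : List Letter → Prop
  | base : IsGFF []
  | nabla (u v : List Letter) (k : ℕ) :
      IsGFF (u ++ List.replicate k N ++ v) →
      IsGFF (u ++ [E] ++ List.replicate k N ++ [W] ++ v)
  | delta (u v : List Letter) (k : ℕ) :
      IsGFF (u ++ List.replicate k W ++ v) →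
      IsGFF (u ++ [N] ++ List.replicate k W ++ [S] ++ v)

/-- The latitude of a word: number of `N`'s minus number of `S`'s. -/
def lat (w : List Letter) : ℤ := (w.count N : ℤ) - (w.count S : ℤ)

/-- The longitude of a word: number of `E`'s minus number of `W`'s. -/
def long (w : List Letter) : ℤ := (w.count E : ℤ) - (w.count W : ℤ)

/-- The size of a word: half its length. -/
def size (w : List Letter) : ℕ := w.length / 2

/-- The lengths of the nonempty prefixes of `w` with latitude 0, in increasing order. -/
def zeroPrefixLengths (w : List Letter) : List ℕ :=
  ((List.range w.length).map (· + 1)).filter (fun m => decide (lat (w.take m) = 0))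

/-- `ℓ(w)`: the number of nonempty prefixes of `w` (including `w` itself) with latitude 0. -/
def ell (w : List Letter) : ℕ := (zeroPrefixLengths w).length

/-- The length of the `i`-th shortest prefix of `w` with latitude 0
(the 0-th such prefix being the empty one). -/
def zeroPrefixLen (w : List Letter) (i : ℕ) : ℕ := (0 :: zeroPrefixLengths w).getD i 0

/-- The `i`-augmentation `✠_i(w)`: writing `w = G_i · H` where `G_i` is the `i`-th
shortest latitude-0 prefix of `w`, it is `G_i · N · H · S`. -/
def aug (w : List Letter) (i : ℕ) : List Letter :=
  w.take (zeroPrefixLen w i) ++ [Letter.N] ++ w.drop (zeroPrefixLen w i) ++ [Letter.S]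

/-- Concatenation of generalized fighting fish: `F1 ⊕ F2 = F1 · E · F2 · W`. -/
def oplus (w1 w2 : List Letter) : List Letter := w1 ++ [Letter.E] ++ w2 ++ [Letter.W]

/-! ### Auxiliary lemmas -/

lemma lat_append (a b : List Letter) : lat (a ++ b) = lat a + lat b := by
  simp [lat, List.count_append]; ring

lemma lat_repN (k : ℕ) : lat (List.replicate k N) = k := by
  simp [lat, List.count_replicate]

lemma lat_repW (k : ℕ) : lat (List.replicate k W) = 0 := by
  simp [lat, List.count_replicate]

lemma lat_E : lat [E] = 0 := by decide
lemma lat_W : lat [W] = 0 := by decide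
lemma lat_N : lat [N] = 1 := by decide
lemma lat_S : lat [S] = -1 := by decide
lemma lat_nil : lat ([] : List Letter) = 0 := by decide

lemma take_ge (u x : List Letter) {p : ℕ} (hp : u.length ≤ p) :
    (u ++ x).take p = u ++ x.take (p - u.length) := by
  obtain ⟨q, rfl⟩ : ∃ q, p = u.length + q := ⟨p - u.length, by omega⟩
  simp [List.take_append]

lemma drop_ge (u x : List Letter) {p : ℕ} (hp : u.length ≤ p) :
    (u ++ x).drop p = x.drop (p - u.length) := by
  obtain ⟨q, rfl⟩ : ∃ q, p = u.length + q := ⟨p - u.length, by omega⟩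
  simp [List.drop_append]

lemma take_one_ge (a : Letter) (x : List Letter) {p : ℕ} (hp : 1 ≤ p) :
    ([a] ++ x).take p = [a] ++ x.take (p - 1) :=
  take_ge [a] x (by simpa using hp)

lemma drop_one_ge (a : Letter) (x : List Letter) {p : ℕ} (hp : 1 ≤ p) :
    ([a] ++ x).drop p = x.drop (p - 1) :=
  drop_ge [a] x (by simpa using hp)

lemma take_rep_le (c : Letter) (x : List Letter) {k m : ℕ} (hm : m ≤ k) :
    (List.replicate k c ++ x).take m = List.replicate m c := by
  rw [List.take_append_of_le_length (by simpa using hm), List.take_replicate]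
  congr 1; omega

lemma drop_rep_le (c : Letter) (x : List Letter) {k m : ℕ} (hm : m ≤ k) :
    (List.replicate k c ++ x).drop m = List.replicate (k - m) c ++ x := by
  rw [List.drop_append_of_le_length (by simpa using hm), List.drop_replicate]

lemma take_rep_ge (c : Letter) (x : List Letter) {k m : ℕ} (hm : k ≤ m) :
    (List.replicate k c ++ x).take m = List.replicate k c ++ x.take (m - k) := by
  have := take_ge (List.replicate k c) x (p := m) (by simpa using hm)
  simpa using this

lemma drop_rep_ge (c : Letter) (x : List Letter) {k m : ℕ} (hm : k ≤ m) :
    (List.replicate k c ++ x).drop m = x.drop (m - k) := by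
  have := drop_ge (List.replicate k c) x (p := m) (by simpa using hm)
  simpa using this

/-- Every prefix of a generalized fighting fish has nonnegative latitude. -/
lemma lat_take_nonneg {F : List Letter} (hF : IsGFF F) : ∀ p, 0 ≤ lat (F.take p) := by
  induction hF with
  | base => intro p; simp [lat]
  | nabla u v k h ih =>
    intro p
    simp only [List.append_assoc] at ih ⊢
    have hu : 0 ≤ lat u := by
      have := ih u.length
      rwa [take_ge u _ le_rfl, Nat.sub_self, List.take_zero, List.append_nil] at this
    rcases le_or_gt p u.length with h1 | h1
    · rw [List.take_append_of_le_length h1]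
      have := ih p
      rwa [List.take_append_of_le_length h1] at this
    rcases le_or_gt p (u.length + 1 + k) with h2 | h2
    · rw [take_ge u _ (by omega), take_one_ge _ _ (by omega),
        take_rep_le _ _ (show p - u.length - 1 ≤ k by omega)]
      simp only [lat_append, lat_E, lat_repN]
      have : (0:ℤ) ≤ (p - u.length - 1 : ℕ) := Int.ofNat_nonneg _
      omega
    · rw [take_ge u _ (by omega), take_one_ge _ _ (by omega),
        take_rep_ge _ _ (show k ≤ p - u.length - 1 by omega),
        take_one_ge _ _ (by omega)]
      have := ih (u.length + k + (p - u.length - 1 - k - 1))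
      rw [take_ge u _ (by omega), take_rep_ge _ _ (show k ≤ u.length + k + (p - u.length - 1 - k - 1) - u.length by omega)] at this
      simp only [lat_append, lat_E, lat_W, lat_repN] at this ⊢
      have he : u.length + k + (p - u.length - 1 - k - 1) - u.length - k = p - u.length - 1 - k - 1 := by omega
      rw [he] at this
      omega
  | delta u v k h ih =>
    intro p
    simp only [List.append_assoc] at ih ⊢
    have hu : 0 ≤ lat u := by
      have := ih u.length
      rwa [take_ge u _ le_rfl, Nat.sub_self, List.take_zero, List.append_nil] at this
    rcases le_or_gt p u.length with h1 | h1
    · rw [List.take_append_of_le_length h1]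
      have := ih p
      rwa [List.take_append_of_le_length h1] at this
    rcases le_or_gt p (u.length + 1 + k) with h2 | h2
    · rw [take_ge u _ (by omega), take_one_ge _ _ (by omega),
        take_rep_le _ _ (show p - u.length - 1 ≤ k by omega)]
      simp only [lat_append, lat_N, lat_repW]
      omega
    · rw [take_ge u _ (by omega), take_one_ge _ _ (by omega),
        take_rep_ge _ _ (show k ≤ p - u.length - 1 by omega),
        take_one_ge _ _ (by omega)]
      have := ih (u.length + k + (p - u.length - 1 - k - 1))
      rw [take_ge u _ (by omega), take_rep_ge _ _ (show k ≤ u.length + k + (p - u.length - 1 - k - 1) - u.length by omega)] at this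
      simp only [lat_append, lat_N, lat_S, lat_repW] at this ⊢
      have he : u.length + k + (p - u.length - 1 - k - 1) - u.length - k = p - u.length - 1 - k - 1 := by omega
      rw [he] at this
      omega

/-- Key lemma: inserting `N` at any latitude-0 cut point and `S` at the end of a
generalized fighting fish produces a generalized fighting fish. -/
lemma gff_insert {F : List Letter} (hF : IsGFF F) :
    ∀ p, p ≤ F.length → lat (F.take p) = 0 →
      IsGFF (F.take p ++ [N] ++ F.drop p ++ [S]) := by
  induction hF with
  | base =>
    intro p hp _
    simp only [List.length_nil, Nat.le_zero] at hp
    subst hp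
    simpa using IsGFF.delta [] [] 0 IsGFF.base
  | nabla u v k h ih =>
    intro p hp hlat
    simp only [List.append_assoc, List.length_append, List.length_replicate,
      List.length_cons, List.length_nil] at ih hp hlat ⊢
    have hnn := lat_take_nonneg h
    simp only [List.append_assoc] at hnn
    have hu : 0 ≤ lat u := by
      have := hnn u.length
      rwa [take_ge u _ le_rfl, Nat.sub_self, List.take_zero, List.append_nil] at this
    rcases le_or_gt p u.length with h1 | h1
    · -- cut inside u
      rw [List.take_append_of_le_length h1, List.drop_append_of_le_length h1]
      have hprem := ih p (by omega)
        (by rw [List.take_append_of_le_length h1]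
            rwa [List.take_append_of_le_length h1] at hlat)
      rw [List.take_append_of_le_length h1, List.drop_append_of_le_length h1] at hprem
      have := IsGFF.nabla (u.take p ++ [N] ++ u.drop p) (v ++ [S]) k
        (by simpa [List.append_assoc] using hprem)
      simpa [List.append_assoc] using this
    rcases le_or_gt p (u.length + 1 + k) with h2 | h2
    · -- cut after the inserted E or within the N-block
      rw [take_ge u _ (by omega), take_one_ge _ _ (by omega), take_rep_le _ _ (by omega : p - u.length - 1 ≤ k)] at hlat
      simp only [lat_append, lat_E, lat_repN] at hlat
      have hlu : lat u = 0 := by omega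
      have hp' : p = u.length + 1 := by omega
      subst hp'
      rw [take_ge u _ (by omega), take_one_ge _ _ (by omega), drop_ge u _ (by omega),
        drop_one_ge _ _ (by omega)]
      simp only [Nat.add_sub_cancel_left, Nat.sub_self, List.take_zero, List.drop_zero,
        List.append_nil]
      have hprem := ih u.length (by omega)
        (by rwa [take_ge u _ le_rfl, Nat.sub_self, List.take_zero, List.append_nil])
      rw [take_ge u _ le_rfl, Nat.sub_self, List.take_zero, List.append_nil,
        drop_ge u _ le_rfl, Nat.sub_self, List.drop_zero] at hprem
      have := IsGFF.nabla u (v ++ [S]) (k + 1)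
        (by simpa [List.replicate_succ, List.append_assoc] using hprem)
      simpa [List.replicate_succ, List.append_assoc] using this
    · -- cut after the inserted W or within v
      set q := p - u.length - k - 2 with hq
      have hpe : p = u.length + 1 + k + 1 + q := by omega
      have hqv : q ≤ v.length := by omega
      rw [take_ge u _ (by omega), take_one_ge _ _ (by omega),
        take_rep_ge _ _ (show k ≤ p - u.length - 1 by omega),
        take_one_ge _ _ (by omega)] at hlat
      have he1 : p - u.length - 1 - k - 1 = q := by omega
      rw [he1] at hlat
      simp only [lat_append, lat_E, lat_W, lat_repN] at hlat
      -- latitude of u ++ v.take q part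
      rw [take_ge u _ (by omega), take_one_ge _ _ (by omega),
        take_rep_ge _ _ (show k ≤ p - u.length - 1 by omega),
        take_one_ge _ _ (by omega), he1,
        drop_ge u _ (by omega), drop_one_ge _ _ (by omega),
        drop_rep_ge _ _ (show k ≤ p - u.length - 1 by omega),
        drop_one_ge _ _ (by omega), he1]
      have hprem := ih (u.length + k + q) (by omega)
        (by
          rw [take_ge u _ (by omega), take_rep_ge _ _ (show k ≤ u.length + k + q - u.length by omega)]
          have : u.length + k + q - u.length - k = q := by omega
          rw [this]
          simp only [lat_append, lat_repN]
          omega)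
      rw [take_ge u _ (by omega), take_rep_ge _ _ (show k ≤ u.length + k + q - u.length by omega),
        drop_ge u _ (by omega), drop_rep_ge _ _ (show k ≤ u.length + k + q - u.length by omega)] at hprem
      have he2 : u.length + k + q - u.length - k = q := by omega
      rw [he2] at hprem
      have := IsGFF.nabla u (v.take q ++ [N] ++ v.drop q ++ [S]) k
        (by simpa [List.append_assoc] using hprem)
      simpa [List.append_assoc] using this
  | delta u v k h ih =>
    intro p hp hlat
    simp only [List.append_assoc, List.length_append, List.length_replicate,
      List.length_cons, List.length_nil] at ih hp hlat ⊢
    have hnn := lat_take_nonneg h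
    simp only [List.append_assoc] at hnn
    have hu : 0 ≤ lat u := by
      have := hnn u.length
      rwa [take_ge u _ le_rfl, Nat.sub_self, List.take_zero, List.append_nil] at this
    rcases le_or_gt p u.length with h1 | h1
    · -- cut inside u
      rw [List.take_append_of_le_length h1, List.drop_append_of_le_length h1]
      have hprem := ih p (by omega)
        (by rw [List.take_append_of_le_length h1]
            rwa [List.take_append_of_le_length h1] at hlat)
      rw [List.take_append_of_le_length h1, List.drop_append_of_le_length h1] at hprem
      have := IsGFF.delta (u.take p ++ [N] ++ u.drop p) (v ++ [S]) k
        (by simpa [List.append_assoc] using hprem)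
      simpa [List.append_assoc] using this
    rcases le_or_gt p (u.length + 1 + k) with h2 | h2
    · -- cut after the inserted N or within the W-block: impossible
      exfalso
      rw [take_ge u _ (by omega), take_one_ge _ _ (by omega),
        take_rep_le _ _ (show p - u.length - 1 ≤ k by omega)] at hlat
      simp only [lat_append, lat_N, lat_repW] at hlat
      omega
    rcases le_or_gt p (u.length + k + 2) with h3 | h3
    · -- cut right after the inserted S
      have hp' : p = u.length + k + 2 := by omega
      subst hp'
      rw [take_ge u _ (by omega), take_one_ge _ _ (by omega),
        take_rep_ge _ _ (show k ≤ u.length + k + 2 - u.length - 1 by omega),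
        take_one_ge _ _ (by omega)] at hlat ⊢
      rw [drop_ge u _ (by omega), drop_one_ge _ _ (by omega),
        drop_rep_ge _ _ (show k ≤ u.length + k + 2 - u.length - 1 by omega),
        drop_one_ge _ _ (by omega)]
      have he1 : u.length + k + 2 - u.length - 1 - k - 1 = 0 := by omega
      rw [he1] at hlat ⊢
      simp only [List.take_zero, List.drop_zero, List.append_nil] at hlat ⊢
      simp only [lat_append, lat_N, lat_S, lat_repW] at hlat
      have hprem := ih (u.length + k) (by omega)
        (by
          rw [take_ge u _ (by omega), take_rep_ge _ _ (show k ≤ u.length + k - u.length by omega)]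
          have : u.length + k - u.length - k = 0 := by omega
          rw [this]
          simp only [List.take_zero, List.append_nil, lat_append, lat_repW]
          omega)
      rw [take_ge u _ (by omega), take_rep_ge _ _ (show k ≤ u.length + k - u.length by omega),
        drop_ge u _ (by omega), drop_rep_ge _ _ (show k ≤ u.length + k - u.length by omega)] at hprem
      have he2 : u.length + k - u.length - k = 0 := by omega
      rw [he2] at hprem
      simp only [List.take_zero, List.append_nil, List.drop_zero] at hprem
      have := IsGFF.delta u ([N] ++ v ++ [S]) k
        (by simpa [List.append_assoc] using hprem)
      simpa [List.append_assoc] using this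
    · -- cut within v
      set q := p - u.length - k - 2 with hq
      have hq1 : 1 ≤ q := by omega
      have hqv : q ≤ v.length := by omega
      rw [take_ge u _ (by omega), take_one_ge _ _ (by omega),
        take_rep_ge _ _ (show k ≤ p - u.length - 1 by omega),
        take_one_ge _ _ (by omega)] at hlat ⊢
      rw [drop_ge u _ (by omega), drop_one_ge _ _ (by omega),
        drop_rep_ge _ _ (show k ≤ p - u.length - 1 by omega),
        drop_one_ge _ _ (by omega)]
      have he1 : p - u.length - 1 - k - 1 = q := by omega
      rw [he1] at hlat ⊢
      simp only [lat_append, lat_N, lat_S, lat_repW] at hlat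
      have hprem := ih (u.length + k + q) (by omega)
        (by
          rw [take_ge u _ (by omega), take_rep_ge _ _ (show k ≤ u.length + k + q - u.length by omega)]
          have : u.length + k + q - u.length - k = q := by omega
          rw [this]
          simp only [lat_append, lat_repW]
          omega)
      rw [take_ge u _ (by omega), take_rep_ge _ _ (show k ≤ u.length + k + q - u.length by omega),
        drop_ge u _ (by omega), drop_rep_ge _ _ (show k ≤ u.length + k + q - u.length by omega)] at hprem
      have he2 : u.length + k + q - u.length - k = q := by omega
      rw [he2] at hprem
      have := IsGFF.delta u (v.take q ++ [N] ++ v.drop q ++ [S]) k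
        (by simpa [List.append_assoc] using hprem)
      simpa [List.append_assoc] using this

/-- For a generalized fighting fish `F` and `0 ≤ i ≤ ℓ(F)`, the `i`-augmentation
`✠_i(F)` is a generalized fighting fish. -/
theorem gff_aug (F : List Letter) (hF : IsGFF F) (i : ℕ) (hi : i ≤ ell F) :
    IsGFF (aug F i) := by
  have key : zeroPrefixLen F i ≤ F.length ∧ lat (F.take (zeroPrefixLen F i)) = 0 := by
    cases i with
    | zero => exact ⟨Nat.zero_le _, by simp [zeroPrefixLen, lat]⟩
    | succ j =>
      have hj : j < (zeroPrefixLengths F).length := hi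
      have hmem : zeroPrefixLen F (j + 1) ∈ zeroPrefixLengths F := by
        show (zeroPrefixLengths F).getD j 0 ∈ _
        rw [List.getD_eq_getElem _ _ hj]
        exact List.getElem_mem _
      rw [zeroPrefixLengths, List.mem_filter, List.mem_map] at hmem
      obtain ⟨⟨a, ha, he⟩, h2⟩ := hmem
      rw [List.mem_range] at ha
      rw [decide_eq_true_eq] at h2
      exact ⟨by omega, h2⟩
  unfold aug
  exact gff_insert hF _ key.1 key.2
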